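/- Let X, Y be real symmetric N×N matrices with Y positive definite, Z = X + iY, and C = i Y^{-1/2} [−Z, I_N]. Then Σ·Re(C†C)·Σᵀ equals the block matrix [[Y^{-1}, Y^{-1}X], [X Y^{-1}, X Y^{-1} X + Y]], where Σ = [[0, I_N], [−I_N, 0]]. -/

import Mathlib

open Matrix

private lemma mapc_mul {n : ℕ} (A B : Matrix (Fin n) (Fin n) ℝ) :
    A.map (fun a => (a : ℂ)) * B.map (fun a => (a : ℂ))
      = (A * B).map (fun a => (a : ℂ)) := by
  ext i j
  simp [Matrix.mul_apply, Matrix.map_apply]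

private lemma re_mix {n m : ℕ} (A B : Matrix (Fin n) (Fin m) ℝ) :
    (A.map (fun a => (a : ℂ)) + Complex.I • B.map (fun a => (a : ℂ))).map Complex.re = A := by
  ext i j
  simp [Matrix.map_apply, Matrix.add_apply, Matrix.smul_apply, Complex.add_re,
    smul_eq_mul, Complex.mul_re]

/-- Σ Re(C†C) Σᵀ = [[Y⁻¹, Y⁻¹X],[XY⁻¹, XY⁻¹X + Y]]. -/
theorem stmt5 (N : ℕ) (hN : 0 < N)
    (X Y Ysq : Matrix (Fin N) (Fin N) ℝ)
    (hX : X.IsSymm) (hY : Y.IsSymm) (hYpd : Y.PosDef)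
    (hYsqPD : Ysq.PosDef) (hYsqSym : Ysq.IsSymm) (hYsq : Ysq * Ysq = Y)
    (Z : Matrix (Fin N) (Fin N) ℂ)
    (hZ : Z = X.map (fun a => (a : ℂ)) + Complex.I • Y.map (fun a => (a : ℂ)))
    (C : Matrix (Fin N) (Fin N ⊕ Fin N) ℂ)
    (hC : C = Complex.I • ((Ysq⁻¹).map (fun a => (a : ℂ)) * fromCols (-Z) 1))
    (Sg : Matrix (Fin N ⊕ Fin N) (Fin N ⊕ Fin N) ℝ)
    (hSg : Sg = fromBlocks 0 1 (-1) 0) :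
    Sg * (Cᴴ * C).map Complex.re * Sgᵀ
      = fromBlocks Y⁻¹ (Y⁻¹ * X) (X * Y⁻¹) (X * Y⁻¹ * X + Y) := by
  have hdet : IsUnit Y.det := isUnit_iff_ne_zero.mpr hYpd.det_pos.ne'
  have hYY : Y * Y⁻¹ = 1 := mul_nonsing_inv Y hdet
  have hYY' : Y⁻¹ * Y = 1 := nonsing_inv_mul Y hdet
  set c : ℝ → ℂ := fun a => (a : ℂ) with hc
  -- symmetry of Ysq⁻¹
  have hQsym : (Ysq⁻¹)ᵀ = Ysq⁻¹ := by
    rw [transpose_nonsing_inv, hYsqSym.eq]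
  have hQQ : Ysq⁻¹ * Ysq⁻¹ = Y⁻¹ := by
    rw [← hYsq, Matrix.mul_inv_rev]
  set Qc : Matrix (Fin N) (Fin N) ℂ := (Ysq⁻¹).map c with hQc
  have hQH : Qcᴴ = Qc := by
    ext i j
    simp only [conjTranspose_apply, hQc, Matrix.map_apply, hc, Complex.star_def,
      Complex.conj_ofReal]
    rw [show Ysq⁻¹ j i = Ysq⁻¹ i j from congrFun (congrFun hQsym i) j]
  have hZH : Zᴴ = X.map c - Complex.I • Y.map c := by
    rw [hZ]
    ext i j
    simp only [conjTranspose_apply, Matrix.add_apply, Matrix.smul_apply, Matrix.map_apply,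
      Matrix.sub_apply, hc, star_add, Complex.star_def, Complex.conj_ofReal, _root_.map_mul,
      Complex.conj_I, smul_eq_mul]
    rw [hX.apply i j, hY.apply i j]
    ring
  -- compute Cᴴ * C
  have hCH : Cᴴ = (-Complex.I) • (fromRows (-Zᴴ) 1 * Qc) := by
    rw [hC, conjTranspose_smul, conjTranspose_mul,
      conjTranspose_fromCols_eq_fromRows_conjTranspose, hQH]
    simp [Complex.star_def, Complex.conj_I]
  set Wc : Matrix (Fin N) (Fin N) ℂ := (Y⁻¹).map c with hWc
  have hCC : Cᴴ * C = fromBlocks (-Zᴴ * (Wc * -Z)) (-Zᴴ * Wc) (Wc * -Z) Wc := by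
    rw [hCH, hC, Matrix.smul_mul, Matrix.mul_smul, smul_smul]
    rw [show -Complex.I * Complex.I = 1 by simp [Complex.I_mul_I], one_smul]
    rw [Matrix.mul_assoc, ← Matrix.mul_assoc Qc Qc, hQc, mapc_mul, hQQ, ← hWc,
      Matrix.mul_fromCols, Matrix.mul_one, fromRows_mul_fromCols,
      Matrix.one_mul, Matrix.one_mul]
  -- blocks in mixed real/imaginary form
  have hb11 : -Zᴴ * (Wc * -Z)
      = (X * (Y⁻¹ * X) + Y).map c + Complex.I • ((X - Y * (Y⁻¹ * X)).map c) := by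
    rw [neg_mul, mul_neg, mul_neg, neg_neg, hZH, hZ, hWc]
    simp only [hc, _root_.mul_add, _root_.sub_mul, _root_.mul_sub, smul_mul_assoc,
      mul_smul_comm, smul_sub, smul_smul, mapc_mul, Complex.I_mul_I, neg_one_smul]
    rw [hYY', _root_.mul_one, _root_.mul_one]
    have h1 : ((X * (Y⁻¹ * X) + Y).map c : Matrix (Fin N) (Fin N) ℂ)
        = (X * (Y⁻¹ * X)).map c + Y.map c := by
      ext i j; simp [Matrix.map_apply, Matrix.add_apply, hc]
    have h2 : ((X - Y * (Y⁻¹ * X)).map c : Matrix (Fin N) (Fin N) ℂ)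
        = X.map c - (Y * (Y⁻¹ * X)).map c := by
      ext i j; simp [Matrix.map_apply, Matrix.sub_apply, hc]
    simp only [hc] at h1 h2
    rw [h1, h2]
    module
  have hb12 : -Zᴴ * Wc = (-(X * Y⁻¹)).map c + Complex.I • ((Y * Y⁻¹).map c) := by
    rw [hZH, neg_sub, hWc]
    simp only [hc, _root_.sub_mul, smul_mul_assoc, mapc_mul]
    have h1 : ((-(X * Y⁻¹)).map c : Matrix (Fin N) (Fin N) ℂ) = -((X * Y⁻¹).map c) := by
      ext i j; simp [Matrix.map_apply, Matrix.neg_apply, hc]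
    simp only [hc] at h1
    rw [h1]; module
  have hb21 : Wc * -Z = (-(Y⁻¹ * X)).map c + Complex.I • ((-(Y⁻¹ * Y)).map c) := by
    rw [hZ, mul_neg, hWc]
    simp only [hc, _root_.mul_add, mul_smul_comm, mapc_mul]
    have h1 : ((-(Y⁻¹ * X)).map c : Matrix (Fin N) (Fin N) ℂ) = -((Y⁻¹ * X).map c) := by
      ext i j; simp [Matrix.map_apply, Matrix.neg_apply, hc]
    have h2 : ((-(Y⁻¹ * Y)).map c : Matrix (Fin N) (Fin N) ℂ) = -((Y⁻¹ * Y).map c) := by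
      ext i j; simp [Matrix.map_apply, Matrix.neg_apply, hc]
    simp only [hc] at h1 h2
    rw [h1, h2, smul_neg]
    module
  have hb22 : Wc = (Y⁻¹).map c + Complex.I • ((0 : Matrix (Fin N) (Fin N) ℝ).map c) := by
    rw [hWc]
    have : ((0 : Matrix (Fin N) (Fin N) ℝ).map c : Matrix (Fin N) (Fin N) ℂ) = 0 := by
      ext i j; simp [Matrix.map_apply, Matrix.neg_apply, hc]
    rw [this, smul_zero, add_zero]
  -- take real parts
  have hre : (Cᴴ * C).map Complex.re
      = fromBlocks (X * (Y⁻¹ * X) + Y) (-(X * Y⁻¹)) (-(Y⁻¹ * X)) Y⁻¹ := by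
    rw [hCC, hb11, hb12, hb21, hb22, fromBlocks_map, re_mix, re_mix, re_mix, re_mix]
  rw [hre, hSg, fromBlocks_transpose, fromBlocks_multiply, fromBlocks_multiply]
  simp [Matrix.mul_assoc]
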